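/- Let G be a finite group and H₁, H₂ subgroups of G such that for every g ∈ G the conjugacy class [g] satisfies |[g] ∩ H₁| = |[g] ∩ H₂|. Then the permutation representations of G over ℂ on the left-coset spaces H₁\G and H₂\G (with G acting by right translation Hx ↦ Hxg⁻¹, linearized on the free ℂ-vector spaces on the cosets) are isomorphic as representations of G. -/

import Mathlib

/-- Right translation by `g` on the space `H\G` of left cosets (the quotient of `G` by
the right-coset relation `a ≈ b ↔ b * a⁻¹ ∈ H`): `H x ↦ H x g`. -/
def cosetMul {G : Type*} [Group G] (H : Subgroup G) (g : G)
    (c : Quotient (QuotientGroup.rightRel H)) : Quotient (QuotientGroup.rightRel H) :=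
  Quotient.map' (· * g)
    (fun a b hab => by
      have h : b * a⁻¹ ∈ H := QuotientGroup.rightRel_apply.mp hab
      exact QuotientGroup.rightRel_apply.mpr (by simpa [mul_inv_rev, mul_assoc] using h)) c

set_option linter.unusedSectionVars false
set_option linter.unusedVariables false
set_option maxHeartbeats 1000000

noncomputable section
open LinearMap Module Representation Finset

namespace SunadaAux

variable {G : Type} [Group G] [Fintype G]
variable {V W : Type} [AddCommGroup V] [Module ℂ V] [AddCommGroup W] [Module ℂ W]

/-- Restriction of a representation to an invariant submodule. -/
def subRep (ρ : Representation ℂ G V) (U : Submodule ℂ V) (hU : ∀ g, ∀ x ∈ U, ρ g x ∈ U) :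
    Representation ℂ G U where
  toFun g := (ρ g).restrict (hU g)
  map_one' := by ext x; simp [LinearMap.restrict_apply]
  map_mul' g h := by ext x; simp [LinearMap.restrict_apply]

@[simp] lemma subRep_apply (ρ : Representation ℂ G V) (U : Submodule ℂ V)
    (hU : ∀ g, ∀ x ∈ U, ρ g x ∈ U) (g : G) (x : U) :
    (subRep ρ U hU g x : V) = ρ g (x : V) := rfl

/-- Product of two representations. -/
def prodRep (ρ : Representation ℂ G V) (σ : Representation ℂ G W) :
    Representation ℂ G (V × W) where
  toFun g := (ρ g).prodMap (σ g)
  map_one' := by ext x <;> simp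
  map_mul' g h := by ext x <;> simp

@[simp] lemma prodRep_apply (ρ : Representation ℂ G V) (σ : Representation ℂ G W) (g : G)
    (p : V × W) : prodRep ρ σ g p = (ρ g p.1, σ g p.2) := rfl

/-- The character of a representation. -/
def rchar (ρ : Representation ℂ G V) (g : G) : ℂ := LinearMap.trace ℂ V (ρ g)

lemma rchar_eq_of_equiv (ρ : Representation ℂ G V) (σ : Representation ℂ G W)
    (e : V ≃ₗ[ℂ] W) (he : ∀ g v, e (ρ g v) = σ g (e v)) : rchar σ = rchar ρ := by
  funext g
  have h : σ g = e.conj (ρ g) := by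
    ext w
    rw [LinearEquiv.conj_apply]
    simp only [LinearMap.comp_apply, LinearEquiv.coe_coe]
    rw [he g (e.symm w), LinearEquiv.apply_symm_apply]
  rw [rchar, h, LinearMap.trace_conj']
  rfl

lemma rchar_prod [FiniteDimensional ℂ V] [FiniteDimensional ℂ W]
    (ρ : Representation ℂ G V) (σ : Representation ℂ G W) (g : G) :
    rchar (prodRep ρ σ) g = rchar ρ g + rchar σ g := by
  simpa [rchar, prodRep] using LinearMap.trace_prodMap' (ρ g) (σ g)

lemma prodEquiv_equivariant (ρ : Representation ℂ G V) (U K : Submodule ℂ V)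
    (hU : ∀ g, ∀ x ∈ U, ρ g x ∈ U) (hK : ∀ g, ∀ x ∈ K, ρ g x ∈ K) (h : IsCompl U K)
    (g : G) (p : U × K) :
    Submodule.prodEquivOfIsCompl U K h (prodRep (subRep ρ U hU) (subRep ρ K hK) g p)
      = ρ g (Submodule.prodEquivOfIsCompl U K h p) := by
  obtain ⟨u, k⟩ := p
  simp [Submodule.coe_prodEquivOfIsCompl, map_add]


lemma exists_invariant_compl (ρ : Representation ℂ G V) (U : Submodule ℂ V)
    (hU : ∀ g, ∀ x ∈ U, ρ g x ∈ U) :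
    ∃ K : Submodule ℂ V, (∀ g, ∀ x ∈ K, ρ g x ∈ K) ∧ IsCompl U K := by
  obtain ⟨W₀, hW₀⟩ := Submodule.exists_isCompl U
  set π₀ : V →ₗ[ℂ] V := U.subtype ∘ₗ Submodule.projectionOnto U W₀ hW₀ with hπ₀
  have hπ₀mem : ∀ v, π₀ v ∈ U := fun v => (Submodule.projectionOnto U W₀ hW₀ v).2
  have hπ₀fix : ∀ u ∈ U, π₀ u = u := by
    intro u hu
    simp [hπ₀, Submodule.projectionOnto_apply_left hW₀ ⟨u, hu⟩]
  set E : V →ₗ[ℂ] V :=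
    (Fintype.card G : ℂ)⁻¹ • ∑ g : G, (ρ g) ∘ₗ π₀ ∘ₗ (ρ g⁻¹) with hE
  have hcard : (Fintype.card G : ℂ) ≠ 0 := Nat.cast_ne_zero.mpr Fintype.card_ne_zero
  have hmul : ∀ (a b : G) (w : V), ρ a (ρ b w) = ρ (a * b) w := by
    intro a b w; rw [map_mul]; rfl
  have hmem : ∀ v, E v ∈ U := by
    intro v
    rw [hE]
    simp only [LinearMap.smul_apply, LinearMap.sum_apply, LinearMap.comp_apply]
    exact Submodule.smul_mem _ _ (Submodule.sum_mem _ fun g _ => hU g _ (hπ₀mem _))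
  have hfix : ∀ u ∈ U, E u = u := by
    intro u hu
    rw [hE]
    simp only [LinearMap.smul_apply, LinearMap.sum_apply, LinearMap.comp_apply]
    have h1 : ∀ g : G, ρ g (π₀ (ρ g⁻¹ u)) = u := by
      intro g
      rw [hπ₀fix _ (hU g⁻¹ u hu), hmul, mul_inv_cancel, map_one, Module.End.one_apply]
    rw [Finset.sum_congr rfl fun g _ => h1 g]
    simp [Finset.card_univ, ← Nat.cast_smul_eq_nsmul ℂ, smul_smul, inv_mul_cancel₀ hcard]
  have hcomm : ∀ (h : G) (v : V), E (ρ h v) = ρ h (E v) := by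
    intro h v
    rw [hE]
    simp only [LinearMap.smul_apply, LinearMap.sum_apply, LinearMap.comp_apply, map_smul]
    rw [map_sum]
    congr 1
    refine (Fintype.sum_equiv (Equiv.mulLeft h)
      (fun g => ρ h (ρ g (π₀ (ρ g⁻¹ v)))) _ (fun g => ?_)).symm
    simp only [Equiv.coe_mulLeft]
    rw [hmul h g, hmul (h * g)⁻¹ h]
    congr 2
    group
  refine ⟨LinearMap.ker E, ?_, ?_, ?_⟩
  · intro g x hx
    rw [LinearMap.mem_ker] at hx ⊢
    rw [hcomm, hx, map_zero]
  · rw [Submodule.disjoint_def]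
    intro x hxU hxK
    rw [LinearMap.mem_ker] at hxK
    rw [← hfix x hxU, hxK]
  · rw [codisjoint_iff, eq_top_iff]
    intro v _
    rw [Submodule.mem_sup]
    refine ⟨E v, hmem v, v - E v, ?_, add_sub_cancel _ _⟩
    rw [LinearMap.mem_ker, map_sub, hfix _ (hmem v), sub_self]


lemma fdrep_char (V : Type) [AddCommGroup V] [Module ℂ V] [FiniteDimensional ℂ V]
    (ρ : Representation ℂ G V) (g : G) : (FDRep.of ρ).character g = rchar ρ g := rfl

/-- The dimension of the space of intertwiners is determined by characters. -/
lemma finrank_inv_linHom (V W : Type) [AddCommGroup V] [Module ℂ V] [FiniteDimensional ℂ V]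
    [AddCommGroup W] [Module ℂ W] [FiniteDimensional ℂ W]
    (ρ : Representation ℂ G V) (σ : Representation ℂ G W) :
    (finrank ℂ (invariants (linHom ρ σ)) : ℂ) =
      (Fintype.card G : ℂ)⁻¹ * ∑ g : G, rchar ρ g⁻¹ * rchar σ g := by
  letI : Invertible (Fintype.card G : ℂ) :=
    invertibleOfNonzero (Nat.cast_ne_zero.mpr Fintype.card_ne_zero)
  have h1 := FDRep.average_char_eq_finrank_invariants (FDRep.of (linHom ρ σ))
  have h2 : ∀ g : G, rchar (linHom ρ σ) g = rchar ρ g⁻¹ * rchar σ g := by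
    intro g
    have h3 : (FDRep.of (linHom ρ σ)).character g =
        (FDRep.of ρ).character g⁻¹ * (FDRep.of σ).character g :=
      FDRep.char_linHom (FDRep.of ρ) (FDRep.of σ) g
    simp only [fdrep_char] at h3
    exact h3
  simp only [fdrep_char] at h1
  rw [show (FDRep.of (linHom ρ σ)).ρ = linHom ρ σ from FDRep.of_ρ' _] at h1
  rw [Finset.sum_congr rfl (fun g _ => h2 g)] at h1
  rw [Nat.card_eq_fintype_card] at h1; exact h1.symm


lemma rep_cancel {V : Type} [AddCommGroup V] [Module ℂ V] (ρ : Representation ℂ G V)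
    (g : G) (v : V) : ρ g (ρ g⁻¹ v) = v := by
  rw [← Module.End.mul_apply, ← map_mul, mul_inv_cancel, map_one, Module.End.one_apply]

lemma rep_cancel' {V : Type} [AddCommGroup V] [Module ℂ V] (ρ : Representation ℂ G V)
    (g : G) (v : V) : ρ g⁻¹ (ρ g v) = v := by
  rw [← Module.End.mul_apply, ← map_mul, inv_mul_cancel, map_one, Module.End.one_apply]

lemma exists_nonzero_equivariant {V₁ V₂ : Type} [AddCommGroup V₁] [Module ℂ V₁]
    [FiniteDimensional ℂ V₁] [AddCommGroup V₂] [Module ℂ V₂] [FiniteDimensional ℂ V₂]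
    (ρ₁ : Representation ℂ G V₁) (ρ₂ : Representation ℂ G V₂)
    [Nontrivial V₁] (h : rchar ρ₁ = rchar ρ₂) :
    ∃ f : V₁ →ₗ[ℂ] V₂, f ≠ 0 ∧ ∀ g v, f (ρ₁ g v) = ρ₂ g (f v) := by
  have hd : finrank ℂ (invariants (linHom ρ₁ ρ₂)) = finrank ℂ (invariants (linHom ρ₁ ρ₁)) := by
    have e1 := finrank_inv_linHom V₁ V₂ ρ₁ ρ₂
    have e2 := finrank_inv_linHom V₁ V₁ ρ₁ ρ₁
    have e3 : (finrank ℂ (invariants (linHom ρ₁ ρ₂)) : ℂ) =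
        (finrank ℂ (invariants (linHom ρ₁ ρ₁)) : ℂ) := by rw [e1, e2, h]
    exact_mod_cast e3
  have hid : (LinearMap.id : V₁ →ₗ[ℂ] V₁) ∈ invariants (linHom ρ₁ ρ₁) := by
    intro g
    ext v
    simp [Representation.linHom_apply, rep_cancel ρ₁]
  have hpos : 0 < finrank ℂ (invariants (linHom ρ₁ ρ₁)) := by
    rw [finrank_pos_iff]
    refine ⟨⟨LinearMap.id, hid⟩, 0, ?_⟩
    intro hcon
    obtain ⟨x, hx⟩ := exists_ne (0 : V₁)
    have : (LinearMap.id : V₁ →ₗ[ℂ] V₁) = 0 := by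
      have := congrArg Subtype.val hcon
      simpa using this
    exact hx (by simpa using DFunLike.congr_fun this x)
  rw [← hd] at hpos
  rw [finrank_pos_iff] at hpos
  obtain ⟨f', hf'⟩ := exists_ne (0 : invariants (linHom ρ₁ ρ₂))
  refine ⟨f', by simpa [ZeroMemClass.coe_eq_zero] using Subtype.coe_ne_coe.mpr hf', ?_⟩
  intro g v
  have hmem := f'.2 g
  have := DFunLike.congr_fun hmem (ρ₁ g v)
  simp only [Representation.linHom_apply, LinearMap.comp_apply] at this
  rw [← this, rep_cancel' ρ₁]

lemma equivariant_symm {V₁ V₂ : Type} [AddCommGroup V₁] [Module ℂ V₁]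
    [AddCommGroup V₂] [Module ℂ V₂]
    (ρ₁ : Representation ℂ G V₁) (ρ₂ : Representation ℂ G V₂)
    (e : V₁ ≃ₗ[ℂ] V₂) (he : ∀ g v, e (ρ₁ g v) = ρ₂ g (e v)) :
    ∀ g w, e.symm (ρ₂ g w) = ρ₁ g (e.symm w) := by
  intro g w
  apply e.injective
  rw [he, e.apply_symm_apply, e.apply_symm_apply]

lemma rchar_one {V : Type} [AddCommGroup V] [Module ℂ V] [FiniteDimensional ℂ V]
    (ρ : Representation ℂ G V) : rchar ρ 1 = finrank ℂ V := by
  rw [rchar, map_one]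
  exact LinearMap.trace_one ℂ V

lemma equiv_of_subsingleton {V₁ V₂ : Type} [AddCommGroup V₁] [Module ℂ V₁]
    [FiniteDimensional ℂ V₁] [AddCommGroup V₂] [Module ℂ V₂] [FiniteDimensional ℂ V₂]
    (ρ₁ : Representation ℂ G V₁) (ρ₂ : Representation ℂ G V₂)
    (h0 : finrank ℂ V₁ = 0) (h : rchar ρ₁ = rchar ρ₂) :
    ∃ e : V₁ ≃ₗ[ℂ] V₂, ∀ g v, e (ρ₁ g v) = ρ₂ g (e v) := by
  have h2 : finrank ℂ V₂ = 0 := by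
    have hc : (finrank ℂ V₂ : ℂ) = ((0 : ℕ) : ℂ) := by
      rw [← rchar_one ρ₂, ← h, rchar_one, h0]
    exact_mod_cast hc
  haveI : Subsingleton V₁ := finrank_zero_iff.mp h0
  haveI : Subsingleton V₂ := finrank_zero_iff.mp h2
  exact ⟨LinearEquiv.ofSubsingleton V₁ V₂, fun g v => Subsingleton.elim _ _⟩

theorem equiv_of_rchar_eq_aux : ∀ (n : ℕ) (V₁ V₂ : Type) (i1 : AddCommGroup V₁)
    (i2 : Module ℂ V₁) (i3 : FiniteDimensional ℂ V₁)
    (i4 : AddCommGroup V₂) (i5 : Module ℂ V₂) (i6 : FiniteDimensional ℂ V₂)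
    (ρ₁ : Representation ℂ G V₁) (ρ₂ : Representation ℂ G V₂),
    finrank ℂ V₁ ≤ n → rchar ρ₁ = rchar ρ₂ →
    ∃ e : V₁ ≃ₗ[ℂ] V₂, ∀ g v, e (ρ₁ g v) = ρ₂ g (e v) := by
  intro n
  induction n with
  | zero =>
    intro V₁ V₂ i1 i2 i3 i4 i5 i6 ρ₁ ρ₂ hle hχ
    exact equiv_of_subsingleton ρ₁ ρ₂ (Nat.le_zero.mp hle) hχ
  | succ n ih =>
    intro V₁ V₂ i1 i2 i3 i4 i5 i6 ρ₁ ρ₂ hle hχ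
    by_cases h0 : finrank ℂ V₁ = 0
    · exact equiv_of_subsingleton ρ₁ ρ₂ h0 hχ
    haveI : Nontrivial V₁ := finrank_pos_iff.mp (Nat.pos_of_ne_zero h0)
    obtain ⟨f, hf0, hf⟩ := exists_nonzero_equivariant ρ₁ ρ₂ hχ
    set N := LinearMap.ker f with hNdef
    set R := LinearMap.range f with hRdef
    have hN : ∀ g, ∀ x ∈ N, ρ₁ g x ∈ N := by
      intro g x hx
      rw [hNdef, LinearMap.mem_ker] at hx ⊢
      rw [hf, hx, map_zero]
    have hR : ∀ g, ∀ y ∈ R, ρ₂ g y ∈ R := by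
      rintro g y ⟨x, rfl⟩
      exact ⟨ρ₁ g x, hf g x⟩
    obtain ⟨K, hK, hNK⟩ := exists_invariant_compl ρ₁ N hN
    obtain ⟨C, hC, hRC⟩ := exists_invariant_compl ρ₂ R hR
    have hKR : ∀ x ∈ K, f x ∈ R := fun x _ => ⟨x, rfl⟩
    set φ₀ : K →ₗ[ℂ] R := f.restrict hKR with hφ₀def
    have hφ₀coe : ∀ x : K, (φ₀ x : V₂) = f (x : V₁) := fun x => rfl
    have hφinj : Function.Injective φ₀ := by
      rw [← LinearMap.ker_eq_bot, Submodule.eq_bot_iff]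
      intro x hx
      rw [LinearMap.mem_ker] at hx
      have hx' : f (x : V₁) = 0 := by
        rw [← hφ₀coe, hx]; rfl
      have h1 : (x : V₁) ∈ N := LinearMap.mem_ker.mpr hx'
      exact Subtype.ext (Submodule.disjoint_def.mp hNK.disjoint _ h1 x.2)
    have hφsurj : Function.Surjective φ₀ := by
      rintro ⟨y, x, rfl⟩
      have hx : x ∈ N ⊔ K := by
        rw [codisjoint_iff.mp hNK.codisjoint]
        trivial
      obtain ⟨a, ha, b, hb, hab⟩ := Submodule.mem_sup.mp hx
      refine ⟨⟨b, hb⟩, Subtype.ext ?_⟩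
      rw [hφ₀coe]
      have hfa : f a = 0 := LinearMap.mem_ker.mp ha
      calc f b = f a + f b := by rw [hfa, zero_add]
        _ = f x := by rw [← map_add, hab]
    set φ : K ≃ₗ[ℂ] R := LinearEquiv.ofBijective φ₀ ⟨hφinj, hφsurj⟩ with hφdef
    have hφ : ∀ g x, φ (subRep ρ₁ K hK g x) = subRep ρ₂ R hR g (φ x) := by
      intro g x
      apply Subtype.ext
      show f ((subRep ρ₁ K hK g x : V₁)) = ρ₂ g (f (x : V₁))
      rw [subRep_apply]
      exact hf g (x : V₁)
    -- characters
    have hχ₁ : rchar ρ₁ = rchar (prodRep (subRep ρ₁ N hN) (subRep ρ₁ K hK)) :=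
      rchar_eq_of_equiv _ ρ₁ (Submodule.prodEquivOfIsCompl N K hNK)
        (prodEquiv_equivariant ρ₁ N K hN hK hNK)
    have hχ₂ : rchar ρ₂ = rchar (prodRep (subRep ρ₂ R hR) (subRep ρ₂ C hC)) :=
      rchar_eq_of_equiv _ ρ₂ (Submodule.prodEquivOfIsCompl R C hRC)
        (prodEquiv_equivariant ρ₂ R C hR hC hRC)
    have hχKR : rchar (subRep ρ₂ R hR) = rchar (subRep ρ₁ K hK) :=
      rchar_eq_of_equiv _ _ φ hφ
    have hχNC : rchar (subRep ρ₁ N hN) = rchar (subRep ρ₂ C hC) := by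
      funext g
      have e1 : rchar ρ₁ g = rchar ρ₂ g := by rw [hχ]
      rw [hχ₁, hχ₂, rchar_prod, rchar_prod] at e1
      rw [hχKR] at e1
      linear_combination e1
    -- dimension bound
    have hRpos : 0 < finrank ℂ R := by
      rw [finrank_pos_iff]
      obtain ⟨v, hv⟩ : ∃ v, f v ≠ 0 := by
        by_contra hcon
        push_neg at hcon
        exact hf0 (LinearMap.ext fun v => hcon v)
      exact ⟨⟨f v, ⟨v, rfl⟩⟩, 0, fun hcon => hv (by simpa using congrArg Subtype.val hcon)⟩
    have hrank : finrank ℂ R + finrank ℂ N = finrank ℂ V₁ := by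
      rw [hNdef, hRdef]
      exact LinearMap.finrank_range_add_finrank_ker f
    have hNle : finrank ℂ N ≤ n := by omega
    obtain ⟨e', he'⟩ := ih N C inferInstance inferInstance inferInstance inferInstance inferInstance inferInstance (subRep ρ₁ N hN) (subRep ρ₂ C hC) hNle hχNC
    -- assemble
    set eA : V₁ ≃ₗ[ℂ] (N × K) := (Submodule.prodEquivOfIsCompl N K hNK).symm with heA
    set eB : (N × K) ≃ₗ[ℂ] (C × R) := e'.prodCongr φ with heB
    set eC : (C × R) ≃ₗ[ℂ] (R × C) := LinearEquiv.prodComm ℂ C R with heC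
    set eD : (R × C) ≃ₗ[ℂ] V₂ := Submodule.prodEquivOfIsCompl R C hRC with heD
    refine ⟨eA ≪≫ₗ eB ≪≫ₗ eC ≪≫ₗ eD, ?_⟩
    intro g v
    simp only [LinearEquiv.trans_apply]
    have h1 : eA (ρ₁ g v) = prodRep (subRep ρ₁ N hN) (subRep ρ₁ K hK) g (eA v) :=
      equivariant_symm _ ρ₁ (Submodule.prodEquivOfIsCompl N K hNK)
        (prodEquiv_equivariant ρ₁ N K hN hK hNK) g v
    have h2 : ∀ p, eB (prodRep (subRep ρ₁ N hN) (subRep ρ₁ K hK) g p)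
        = prodRep (subRep ρ₂ C hC) (subRep ρ₂ R hR) g (eB p) := by
      intro p
      rw [heB]
      simp only [LinearEquiv.prodCongr_apply, prodRep_apply, LinearMap.prodMap_apply]
      exact Prod.ext (he' g p.1) (hφ g p.2)
    have h3 : ∀ p, eC (prodRep (subRep ρ₂ C hC) (subRep ρ₂ R hR) g p)
        = prodRep (subRep ρ₂ R hR) (subRep ρ₂ C hC) g (eC p) := by
      intro p
      rfl
    have h4 : ∀ p, eD (prodRep (subRep ρ₂ R hR) (subRep ρ₂ C hC) g p) = ρ₂ g (eD p) :=
      prodEquiv_equivariant ρ₂ R C hR hC hRC g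
    rw [h1, h2, h3, h4]

lemma cosetMul_mk (H : Subgroup G) (g x : G) :
    cosetMul H g (Quotient.mk'' x) = Quotient.mk'' (x * g) := rfl

lemma mk_eq_mk_iff (H : Subgroup G) (a b : G) :
    (Quotient.mk'' a : Quotient (QuotientGroup.rightRel H)) = Quotient.mk'' b ↔ b * a⁻¹ ∈ H := by
  rw [Quotient.eq'']
  exact QuotientGroup.rightRel_apply

lemma cosetMul_comp (H : Subgroup G) (g h : G) (c : Quotient (QuotientGroup.rightRel H)) :
    cosetMul H h (cosetMul H g c) = cosetMul H (g * h) c := by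
  induction c using Quotient.inductionOn' with
  | h x => rw [cosetMul_mk, cosetMul_mk, cosetMul_mk, mul_assoc]

/-- The permutation representation on functions on the coset space. -/
def permRep (H : Subgroup G) : Representation ℂ G (Quotient (QuotientGroup.rightRel H) → ℂ) where
  toFun g := LinearMap.funLeft ℂ ℂ (cosetMul H g)
  map_one' := by
    ext v c
    induction c using Quotient.inductionOn' with
    | h x => simp [LinearMap.funLeft_apply, cosetMul_mk]
  map_mul' g h := by
    ext v c
    simp only [Module.End.mul_apply, LinearMap.funLeft_apply, Module.End.one_apply]
    rw [cosetMul_comp]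

lemma permRep_apply (H : Subgroup G) (g : G) (v : Quotient (QuotientGroup.rightRel H) → ℂ) :
    permRep H g v = fun c => v (cosetMul H g c) := rfl

lemma rchar_permRep (H : Subgroup G) [Fintype (Quotient (QuotientGroup.rightRel H))]
    [DecidableEq (Quotient (QuotientGroup.rightRel H))] (g : G) :
    rchar (permRep H) g =
      ((Finset.univ.filter fun c : Quotient (QuotientGroup.rightRel H) =>
        cosetMul H g c = c).card : ℂ) := by
  classical
  rw [rchar, LinearMap.trace_eq_matrix_trace ℂ (Pi.basisFun ℂ _), Matrix.trace]
  have hdiag : ∀ c, Matrix.diag ((LinearMap.toMatrix (Pi.basisFun ℂ _) (Pi.basisFun ℂ _))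
      (permRep H g)) c = if cosetMul H g c = c then (1 : ℂ) else 0 := by
    intro c
    rw [Matrix.diag_apply, LinearMap.toMatrix_apply, permRep_apply]
    simp [Pi.basisFun_apply, Pi.basisFun_repr, Pi.single_apply]
  rw [Finset.sum_congr rfl fun c _ => hdiag c]
  rw [Finset.sum_boole]

open scoped Classical

/-- fiber counting over the quotient map -/
lemma count1 (H : Subgroup G) (g : G) :
    (univ.filter fun x : G => x * g * x⁻¹ ∈ H).card =
      (univ.filter fun c : Quotient (QuotientGroup.rightRel H) => cosetMul H g c = c).card *
        (univ.filter fun x : G => x ∈ H).card := by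
  have hfix : ∀ x : G, (cosetMul H g (Quotient.mk'' x) = Quotient.mk'' x) ↔ x * g * x⁻¹ ∈ H := by
    intro x
    rw [cosetMul_mk, mk_eq_mk_iff]
    constructor
    · intro h; simpa [mul_inv_rev, mul_assoc] using (inv_mem h)
    · intro h; simpa [mul_inv_rev, mul_assoc] using (inv_mem h)
  rw [Finset.card_eq_sum_card_fiberwise
    (f := fun x : G => (Quotient.mk'' x : Quotient (QuotientGroup.rightRel H)))
    (t := univ.filter fun c => cosetMul H g c = c) ?hmap]
  case hmap =>
    intro x hx
    rw [mem_coe, mem_filter] at hx ⊢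
    exact ⟨mem_univ _, (hfix x).mpr hx.2⟩
  rw [Finset.sum_congr rfl ?hfib, Finset.sum_const, smul_eq_mul]
  case hfib =>
    intro c hc
    rw [mem_filter] at hc
    obtain ⟨x₀, hx₀⟩ : ∃ x₀ : G, Quotient.mk'' x₀ = c := Quotient.exists_rep c
    have hx₀fix : x₀ * g * x₀⁻¹ ∈ H := (hfix x₀).mp (by rw [hx₀]; exact hc.2)
    refine Finset.card_bij (fun x _ => x * x₀⁻¹) ?_ ?_ ?_
    · intro x hx
      rw [mem_filter, mem_filter] at hx
      obtain ⟨⟨-, hxs⟩, hxc⟩ := hx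
      rw [← hx₀, mk_eq_mk_iff] at hxc
      rw [mem_filter]
      exact ⟨mem_univ _, by simpa [mul_inv_rev] using inv_mem hxc⟩
    · intro a _ b _ hab
      exact mul_right_cancel hab
    · intro h hh
      rw [mem_filter] at hh
      refine ⟨h * x₀, ?_, by group⟩
      rw [mem_filter, mem_filter]
      refine ⟨⟨mem_univ _, ?_⟩, ?_⟩
      · have heq : (h * x₀) * g * (h * x₀)⁻¹ = h * (x₀ * g * x₀⁻¹) * h⁻¹ := by group
        rw [heq]
        exact H.mul_mem (H.mul_mem hh.2 hx₀fix) (inv_mem hh.2)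
      · rw [← hx₀, mk_eq_mk_iff]
        simpa using inv_mem hh.2

/-- fiber counting over conjugation -/
lemma count2 (H : Subgroup G) (g : G) :
    (univ.filter fun x : G => x * g * x⁻¹ ∈ H).card =
      (univ.filter fun y : G => (∃ x : G, x * g * x⁻¹ = y) ∧ y ∈ H).card *
        (univ.filter fun z : G => z * g * z⁻¹ = g).card := by
  rw [Finset.card_eq_sum_card_fiberwise
    (f := fun x : G => x * g * x⁻¹)
    (t := univ.filter fun y : G => (∃ x : G, x * g * x⁻¹ = y) ∧ y ∈ H) ?hmap]
  case hmap =>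
    intro x hx
    rw [mem_coe, mem_filter] at hx ⊢
    exact ⟨mem_univ _, ⟨x, rfl⟩, hx.2⟩
  rw [Finset.sum_congr rfl ?hfib, Finset.sum_const, smul_eq_mul]
  case hfib =>
    intro y hy
    rw [mem_filter] at hy
    obtain ⟨-, ⟨x₀, hx₀⟩, hyH⟩ := hy
    refine Finset.card_bij (fun x _ => x₀⁻¹ * x) ?_ ?_ ?_
    · intro x hx
      rw [mem_filter, mem_filter] at hx
      obtain ⟨⟨-, hxs⟩, hxy⟩ := hx
      rw [mem_filter]
      refine ⟨mem_univ _, ?_⟩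
      have heq : (x₀⁻¹ * x) * g * (x₀⁻¹ * x)⁻¹ = x₀⁻¹ * (x * g * x⁻¹) * x₀ := by group
      rw [heq, hxy, ← hx₀]
      group
    · intro a _ b _ hab
      exact mul_left_cancel hab
    · intro z hz
      rw [mem_filter] at hz
      refine ⟨x₀ * z, ?_, by group⟩
      rw [mem_filter, mem_filter]
      have heq : (x₀ * z) * g * (x₀ * z)⁻¹ = x₀ * (z * g * z⁻¹) * x₀⁻¹ := by group
      refine ⟨⟨mem_univ _, ?_⟩, ?_⟩
      · rw [heq, hz.2, hx₀]
        exact hyH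
      · rw [heq, hz.2, hx₀]

lemma natCard_eq_filter (H : Subgroup G) (g : G) :
    Nat.card ({y : G | ∃ x : G, x * g * x⁻¹ = y} ∩ (H : Set G) : Set G) =
      (univ.filter fun y : G => (∃ x : G, x * g * x⁻¹ = y) ∧ y ∈ H).card := by
  rw [Nat.card_coe_set_eq, Set.ncard_eq_toFinset_card']
  congr 1
  ext y
  simp [Set.mem_toFinset]

lemma cardH_eq (H₁ H₂ : Subgroup G)
    (hcard : ∀ g : G,
      Nat.card ({y : G | ∃ x : G, x * g * x⁻¹ = y} ∩ (H₁ : Set G) : Set G) =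
        Nat.card ({y : G | ∃ x : G, x * g * x⁻¹ = y} ∩ (H₂ : Set G) : Set G)) :
    (univ.filter fun x : G => x ∈ H₁).card = (univ.filter fun x : G => x ∈ H₂).card := by
  have key : ∀ H : Subgroup G, (univ.filter fun x : G => x ∈ H).card =
      ∑ c : ConjClasses G, (univ.filter fun y : G =>
        y ∈ H ∧ ConjClasses.mk y = c).card := by
    intro H
    rw [Finset.card_eq_sum_card_fiberwise (f := fun y : G => ConjClasses.mk y)
      (t := univ) (fun x _ => mem_univ _)]
    refine Finset.sum_congr rfl fun c _ => ?_
    congr 1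
    ext y
    simp only [mem_filter, mem_univ, true_and]
    try tauto
  rw [key, key]
  refine Finset.sum_congr rfl fun c _ => ?_
  obtain ⟨gc, hgc⟩ := ConjClasses.exists_rep c
  have hfilter : ∀ H : Subgroup G, (univ.filter fun y : G => y ∈ H ∧ ConjClasses.mk y = c) =
      (univ.filter fun y : G => (∃ x : G, x * gc * x⁻¹ = y) ∧ y ∈ H) := by
    intro H
    ext y
    simp only [mem_filter, mem_univ, true_and]
    have hiff : ConjClasses.mk y = c ↔ ∃ x : G, x * gc * x⁻¹ = y := by
      rw [← hgc, eq_comm, ConjClasses.mk_eq_mk_iff_isConj, isConj_iff]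
    rw [hiff]
    tauto
  rw [hfilter, hfilter, ← natCard_eq_filter, ← natCard_eq_filter]
  exact hcard gc

lemma fixcount_eq (H₁ H₂ : Subgroup G)
    (hcard : ∀ g : G,
      Nat.card ({y : G | ∃ x : G, x * g * x⁻¹ = y} ∩ (H₁ : Set G) : Set G) =
        Nat.card ({y : G | ∃ x : G, x * g * x⁻¹ = y} ∩ (H₂ : Set G) : Set G))
    (g : G) :
    (univ.filter fun c : Quotient (QuotientGroup.rightRel H₁) => cosetMul H₁ g c = c).card =
      (univ.filter fun c : Quotient (QuotientGroup.rightRel H₂) => cosetMul H₂ g c = c).card := by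
  have h11 := count1 H₁ g
  have h21 := count1 H₂ g
  have h12 := count2 H₁ g
  have h22 := count2 H₂ g
  have hm : (univ.filter fun y : G => (∃ x : G, x * g * x⁻¹ = y) ∧ y ∈ H₁).card =
      (univ.filter fun y : G => (∃ x : G, x * g * x⁻¹ = y) ∧ y ∈ H₂).card := by
    rw [← natCard_eq_filter, ← natCard_eq_filter]
    exact hcard g
  have hH := cardH_eq H₁ H₂ hcard
  have hpos : 0 < (univ.filter fun x : G => x ∈ H₂).card :=
    Finset.card_pos.mpr ⟨1, by simp [Subgroup.one_mem]⟩
  have hkey : (univ.filter fun c : Quotient (QuotientGroup.rightRel H₁) =>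
        cosetMul H₁ g c = c).card * (univ.filter fun x : G => x ∈ H₂).card =
      (univ.filter fun c : Quotient (QuotientGroup.rightRel H₂) =>
        cosetMul H₂ g c = c).card * (univ.filter fun x : G => x ∈ H₂).card :=
    calc (univ.filter fun c : Quotient (QuotientGroup.rightRel H₁) =>
          cosetMul H₁ g c = c).card * (univ.filter fun x : G => x ∈ H₂).card
        = (univ.filter fun c : Quotient (QuotientGroup.rightRel H₁) =>
            cosetMul H₁ g c = c).card * (univ.filter fun x : G => x ∈ H₁).card := by rw [hH]
      _ = (univ.filter fun x : G => x * g * x⁻¹ ∈ H₁).card := h11.symm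
      _ = (univ.filter fun y : G => (∃ x : G, x * g * x⁻¹ = y) ∧ y ∈ H₁).card *
            (univ.filter fun z : G => z * g * z⁻¹ = g).card := h12
      _ = (univ.filter fun y : G => (∃ x : G, x * g * x⁻¹ = y) ∧ y ∈ H₂).card *
            (univ.filter fun z : G => z * g * z⁻¹ = g).card := by rw [hm]
      _ = (univ.filter fun x : G => x * g * x⁻¹ ∈ H₂).card := h22.symm
      _ = _ := h21
  exact Nat.eq_of_mul_eq_mul_right hpos hkey

end SunadaAux

end

/-- **Sunada's Lemma 2.** If two subgroups `H₁, H₂` of a finite group `G` meet every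
conjugacy class in the same number of elements, then the permutation representations of
`G` over `ℂ` on the coset spaces `H₁\G` and `H₂\G` (linearized from the right
translation action) are isomorphic: there is a `ℂ`-linear bijection intertwining the
linearized actions. -/
theorem stmt12 {G : Type} [Group G] [Fintype G] (H₁ H₂ : Subgroup G)
    (hcard : ∀ g : G,
      Nat.card ({y : G | ∃ x : G, x * g * x⁻¹ = y} ∩ (H₁ : Set G) : Set G) =
        Nat.card ({y : G | ∃ x : G, x * g * x⁻¹ = y} ∩ (H₂ : Set G) : Set G)) :
    ∃ T : (Quotient (QuotientGroup.rightRel H₁) → ℂ) ≃ₗ[ℂ]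
        (Quotient (QuotientGroup.rightRel H₂) → ℂ),
      ∀ (g : G) (v : Quotient (QuotientGroup.rightRel H₁) → ℂ),
        T (fun c => v (cosetMul H₁ g c)) = fun c => (T v) (cosetMul H₂ g c) := by
  classical
  letI : Fintype (Quotient (QuotientGroup.rightRel H₁)) := Quotient.fintype _
  letI : Fintype (Quotient (QuotientGroup.rightRel H₂)) := Quotient.fintype _
  have hχ : SunadaAux.rchar (SunadaAux.permRep H₁) = SunadaAux.rchar (SunadaAux.permRep H₂) := by
    funext g
    rw [SunadaAux.rchar_permRep, SunadaAux.rchar_permRep]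
    have h := SunadaAux.fixcount_eq H₁ H₂ hcard g
    norm_cast
    convert h using 2 <;> congr!
  obtain ⟨e, he⟩ := SunadaAux.equiv_of_rchar_eq_aux
    (Module.finrank ℂ (Quotient (QuotientGroup.rightRel H₁) → ℂ)) _ _
    inferInstance inferInstance inferInstance inferInstance inferInstance inferInstance
    (SunadaAux.permRep H₁) (SunadaAux.permRep H₂) le_rfl hχ
  exact ⟨e, fun g v => he g v⟩
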